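/- Let q be a power of a prime p, let n ≥ 2, let r be an integer with ⌈n/2⌉ ≤ r ≤ n-1 and gcd(n,r) = 1, let s ≥ 1, and let g_s(y) ∈ F_{q^n}[y] be a separable q-polynomial of degree q^s that splits into linear factors over F_{q^n}. Let Q(y), U(y) ∈ F_{q^n}[y] be nonzero q-polynomials with deg(U) ≤ q^{n-r-1} satisfying Q(y)^{q^{n-r}} = y + U(g_s(y)). Then: (a) there exists a unique polynomial h(x) ∈ F_{q^n}[x] with h(x)^{q^{n-r}} = U(x^{q^{n}+q^{n-r}}); and (b) setting Z := Q(y) - h(x) ∈ F_{q^n}[x,y], the congruence Z^{q^{n-r}} ≡ y - U(x^{q^{n-r}+1}) holds modulo the ideal of F_{q^n}[x,y] generated by g_s(y) - x^{q^{n}+q^{n-r}} + x^{q^{n-r}+1}. -/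

import Mathlib

open Polynomial

/-- A `q`-polynomial (linearized polynomial): every monomial exponent is a power of `q`. -/
def IsqPoly (q : ℕ) {F : Type*} [Semiring F] (f : Polynomial F) : Prop :=
  ∀ i ∈ f.support, ∃ k : ℕ, i = q ^ k

lemma qpoly_aeval_add {F R : Type*} [CommSemiring F] [CommSemiring R] [Algebra F R]
    {p : ℕ} [Fact p.Prime] [CharP R p] (e : ℕ)
    {f : Polynomial F} (hf : IsqPoly (p ^ e) f) (a b : R) :
    aeval (a + b) f = aeval a f + aeval b f := by
  simp only [Polynomial.aeval_def, Polynomial.eval₂_eq_sum, Polynomial.sum_def]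
  rw [← Finset.sum_add_distrib]
  refine Finset.sum_congr rfl fun i hi => ?_
  obtain ⟨k, rfl⟩ := hf i hi
  have h : (p ^ e) ^ k = p ^ (e * k) := by rw [pow_mul]
  rw [h, add_pow_char_pow, mul_add]

lemma qpoly_aeval_sub {F R : Type*} [CommSemiring F] [CommRing R] [Algebra F R]
    {p : ℕ} [Fact p.Prime] [CharP R p] (e : ℕ)
    {f : Polynomial F} (hf : IsqPoly (p ^ e) f) (a b : R) :
    aeval (a - b) f = aeval a f - aeval b f := by
  simp only [Polynomial.aeval_def, Polynomial.eval₂_eq_sum, Polynomial.sum_def]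
  rw [← Finset.sum_sub_distrib]
  refine Finset.sum_congr rfl fun i hi => ?_
  obtain ⟨k, rfl⟩ := hf i hi
  have h : (p ^ e) ^ k = p ^ (e * k) := by rw [pow_mul]
  rw [h, sub_pow_char_pow, mul_sub]

lemma qpoly_dvd_aeval {F R : Type*} [CommSemiring F] [CommSemiring R] [Algebra F R]
    {q : ℕ} (hq : 1 ≤ q) {f : Polynomial F} (hf : IsqPoly q f) (g : R) :
    g ∣ aeval g f := by
  simp only [Polynomial.aeval_def, Polynomial.eval₂_eq_sum, Polynomial.sum_def]
  refine Finset.dvd_sum fun i hi => ?_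
  obtain ⟨k, rfl⟩ := hf i hi
  exact Dvd.dvd.mul_left (dvd_pow_self g (pow_ne_zero k (by omega))) _

lemma pow_root_exists {F : Type*} [Field F] [Finite F] {p : ℕ} [Fact p.Prime] [CharP F p]
    (m A B : ℕ) (hAB : A = B * p ^ m) (U : Polynomial F) :
    ∃ h : Polynomial F, h ^ p ^ m = U.comp (X ^ A) := by
  refine ⟨∑ i ∈ U.support, C ((iterateFrobeniusEquiv F p m).symm (U.coeff i)) * X ^ (i * B), ?_⟩
  have hφ : ∀ f : Polynomial F, f ^ p ^ m = iterateFrobenius (Polynomial F) p m f :=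
    fun f => rfl
  rw [hφ, map_sum, Polynomial.comp, Polynomial.eval₂_eq_sum, Polynomial.sum_def]
  refine Finset.sum_congr rfl fun i hi => ?_
  rw [map_mul, map_pow, iterateFrobenius_def, iterateFrobenius_def, ← Polynomial.C_pow,
    ← iterateFrobeniusEquiv_def F p, RingEquiv.apply_symm_apply]
  congr 1
  rw [← pow_mul, ← pow_mul, hAB]
  ring_nf

theorem Z_pow_congruence_on_subcover
    (p q e n r s : ℕ) (hp : p.Prime) (he : 0 < e) (hq : q = p ^ e)
    (hn : 2 ≤ n) (hr1 : n ≤ 2 * r) (hr2 : r ≤ n - 1) (hgcd : Nat.gcd n r = 1)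
    (hs : 1 ≤ s)
    (F : Type*) [Field F] [Fintype F] (hF : Fintype.card F = q ^ n)
    (gs : Polynomial F)
    (hgs_q : IsqPoly q gs) (hgs_deg : gs.natDegree = q ^ s)
    (hgs_sep : gs.coeff 1 ≠ 0) (hgs_split : Splits (gs.map (RingHom.id F)))
    (Q U : Polynomial F) (hQ0 : Q ≠ 0) (hU0 : U ≠ 0)
    (hQq : IsqPoly q Q) (hUq : IsqPoly q U)
    (hUdeg : U.natDegree ≤ q ^ (n - r - 1))
    (heq : Q ^ q ^ (n - r) = X + U.comp gs) :
    (∃! h : Polynomial F, h ^ q ^ (n - r) = U.comp (X ^ (q ^ n + q ^ (n - r)))) ∧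
    (∀ h : Polynomial F, h ^ q ^ (n - r) = U.comp (X ^ (q ^ n + q ^ (n - r))) →
      (Polynomial.aeval (MvPolynomial.X 1 : MvPolynomial (Fin 2) F) Q
          - Polynomial.aeval (MvPolynomial.X 0 : MvPolynomial (Fin 2) F) h) ^ q ^ (n - r)
        - (MvPolynomial.X 1
            - Polynomial.aeval ((MvPolynomial.X 0 : MvPolynomial (Fin 2) F) ^ (q ^ (n - r) + 1)) U)
        ∈ Ideal.span {Polynomial.aeval (MvPolynomial.X 1 : MvPolynomial (Fin 2) F) gs
            - (MvPolynomial.X 0 : MvPolynomial (Fin 2) F) ^ (q ^ n + q ^ (n - r))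
            + (MvPolynomial.X 0 : MvPolynomial (Fin 2) F) ^ (q ^ (n - r) + 1)}) := by
  subst hq
  haveI : Fact p.Prime := ⟨hp⟩
  -- characteristic of F is p
  haveI : CharP F (ringChar F) := ringChar.charP F
  have hcprime : (ringChar F).Prime := CharP.char_is_prime F _
  obtain ⟨k, -, hk⟩ := FiniteField.card F (ringChar F)
  have hpc : p = ringChar F := by
    have hdvd : p ∣ (ringChar F) ^ (k : ℕ) := by
      rw [← hk, hF, ← pow_mul]
      exact dvd_pow_self p (by positivity)
    exact (Nat.prime_dvd_prime_iff_eq hp hcprime).mp (hp.dvd_of_dvd_pow hdvd)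
  haveI : CharP F p := hpc ▸ ringChar.charP F
  have hqnr : (p ^ e) ^ (n - r) = p ^ (e * (n - r)) := (pow_mul p e (n - r)).symm
  have hrn : r + (n - r) = n := by omega
  have hA : (p ^ e) ^ n + (p ^ e) ^ (n - r) = ((p ^ e) ^ r + 1) * p ^ (e * (n - r)) := by
    rw [add_mul, one_mul, ← hqnr, ← pow_add, hrn]
  have hq1 : 1 ≤ p ^ e := Nat.one_le_pow _ _ hp.pos
  -- uniqueness of roots of the (n-r)-iterated Frobenius on F[X]
  have huniq : ∀ h₁ h₂ : Polynomial F,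
      h₁ ^ (p ^ e) ^ (n - r) = h₂ ^ (p ^ e) ^ (n - r) → h₁ = h₂ := by
    intro h₁ h₂ hh
    have hz : (h₁ - h₂) ^ p ^ (e * (n - r)) = 0 := by
      rw [sub_pow_char_pow, ← hqnr, hh, sub_self]
    have := pow_eq_zero_iff (pow_ne_zero _ hp.ne_zero) |>.mp hz
    exact sub_eq_zero.mp this
  obtain ⟨h₀, hh₀⟩ := pow_root_exists (e * (n - r)) _ ((p ^ e) ^ r + 1) hA U
  rw [← hqnr] at hh₀
  constructor
  · exact ⟨h₀, hh₀, fun y hy => huniq y h₀ (hy.trans hh₀.symm)⟩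
  · intro h hh
    set x := (MvPolynomial.X 0 : MvPolynomial (Fin 2) F)
    set y := (MvPolynomial.X 1 : MvPolynomial (Fin 2) F)
    set A := (p ^ e) ^ n + (p ^ e) ^ (n - r) with hAdef
    set B := (p ^ e) ^ (n - r) with hBdef
    set G := aeval y gs - x ^ A + x ^ (B + 1) with hGdef
    rw [Ideal.mem_span_singleton]
    have h1 : (aeval y Q - aeval x h) ^ B = (aeval y Q) ^ B - (aeval x h) ^ B := by
      rw [hqnr]
      exact sub_pow_char_pow _ _ _
    have h2 : (aeval y Q) ^ B = y + aeval (aeval y gs) U := by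
      rw [← map_pow, heq, map_add, aeval_X, aeval_comp]
    have h3 : (aeval x h) ^ B = aeval (x ^ A) U := by
      rw [← map_pow, hh, aeval_comp, map_pow, aeval_X]
    have h4 : aeval (aeval y gs) U = aeval G U + (aeval (x ^ A) U - aeval (x ^ (B + 1)) U) := by
      have hy : aeval y gs = G + (x ^ A - x ^ (B + 1)) := by rw [hGdef]; ring
      rw [hy, qpoly_aeval_add e hUq, qpoly_aeval_sub e hUq]
    have key : (aeval y Q - aeval x h) ^ B - (y - aeval (x ^ (B + 1)) U) = aeval G U := by
      rw [h1, h2, h3, h4]; ring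
    rw [key]
    exact qpoly_dvd_aeval hq1 hUq G
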